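/- The word w = ⁅⁅x₁, x₂⁆, ⁅x₃, x₄⁆⁆ (the commutator of the commutators of the two pairs of generators) in the free group on four generators is a solution to the 1-out-of-4 picture-hanging puzzle of length 16, and every solution w' to the 1-out-of-4 puzzle has |w'| ≥ 16; hence the minimum length of a 1-out-of-4 solution is exactly 16. -/

import Mathlib

/-- The removal homomorphism: kills the generators with index in `S`. -/
def kill {n : ℕ} (S : Finset (Fin n)) : FreeGroup (Fin n) →* FreeGroup (Fin n) :=
  FreeGroup.lift fun i => if i ∈ S then 1 else FreeGroup.of i

/-- `w` is a solution to the `k`-out-of-`n` picture-hanging puzzle (Demaine convention). -/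
def IsSolution {n : ℕ} (k : ℕ) (w : FreeGroup (Fin n)) : Prop :=
  ∀ S : Finset (Fin n),
    (k ≤ S.card → kill S w = 1) ∧ (S.card < k → kill S w ≠ 1)

open FreeGroup List

variable {α : Type*} [DecidableEq α]

/-- A word is reduced: no adjacent cancelling pair. -/
def Reduced (L : List (α × Bool)) : Prop :=
  List.Chain' (fun a b => (a.1, !a.2) ≠ b) L

lemma Reduced.reduce_eq {L : List (α × Bool)} (h : Reduced L) : FreeGroup.reduce L = L := by
  induction L with
  | nil => rfl
  | cons x L ih =>
    have hL : Reduced L := h.tail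
    rw [FreeGroup.reduce.cons, ih hL]
    cases L with
    | nil => rfl
    | cons y t =>
      have hxy : (x.1, !x.2) ≠ y := List.isChain_cons_cons.mp h |>.1
      have : ¬(x.1 = y.1 ∧ x.2 = !y.2) := by
        rintro ⟨h1, h2⟩
        exact hxy (by cases x; cases y; simp_all)
      simp [this]

lemma reduced_reduce (L : List (α × Bool)) : Reduced (FreeGroup.reduce L) := by
  induction L with
  | nil => exact List.isChain_nil
  | cons x L ih =>
    rw [FreeGroup.reduce.cons]
    rcases h : FreeGroup.reduce L with _ | ⟨y, t⟩
    · exact List.isChain_singleton _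
    · rw [h] at ih
      by_cases hc : x.1 = y.1 ∧ x.2 = !y.2
      · simp only [if_pos hc]
        exact ih.tail
      · simp only [if_neg hc]
        refine List.isChain_cons_cons.mpr ⟨?_, ih⟩
        rintro rfl
        exact hc ⟨rfl, by simp⟩

lemma reduced_toWord (w : FreeGroup α) : Reduced w.toWord := by
  rw [← FreeGroup.reduce_toWord]; exact reduced_reduce _

lemma Reduced.toWord_mk {L : List (α × Bool)} (h : Reduced L) :
    (FreeGroup.mk L).toWord = L := by
  rw [FreeGroup.toWord_mk, h.reduce_eq]

lemma Reduced.norm_mk {L : List (α × Bool)} (h : Reduced L) :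
    (FreeGroup.mk L).norm = L.length := by
  rw [FreeGroup.norm, h.toWord_mk]

lemma Reduced.append_left {L₁ L₂ : List (α × Bool)} (h : Reduced (L₁ ++ L₂)) : Reduced L₁ :=
  (List.isChain_append.mp h).1

lemma Reduced.append_right {L₁ L₂ : List (α × Bool)} (h : Reduced (L₁ ++ L₂)) : Reduced L₂ :=
  (List.isChain_append.mp h).2.1


variable {n : ℕ}

lemma kill_mk (S : Finset (Fin n)) (L : List (Fin n × Bool)) :
    kill S (FreeGroup.mk L) = FreeGroup.mk (L.filter fun p => p.1 ∉ S) := by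
  induction L with
  | nil => simp only [List.filter_nil, ← FreeGroup.one_eq_mk, _root_.map_one]
  | cons x L ih =>
    obtain ⟨i, b⟩ := x
    rw [show ((i,b) :: L) = [(i,b)] ++ L from rfl, ← FreeGroup.mul_mk, _root_.map_mul, ih]
    by_cases hi : i ∈ S
    · have h1 : kill S (FreeGroup.mk [(i, b)]) = 1 := by
        cases b
        · have : FreeGroup.mk [(i, false)] = (FreeGroup.of i)⁻¹ := by
            rw [FreeGroup.of, FreeGroup.inv_mk]; rfl
          simp [this, kill, FreeGroup.lift_apply_of, hi]
        · simp [FreeGroup.of, kill, FreeGroup.lift_apply_of, hi]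
      simp [h1, hi]
    · have h1 : kill S (FreeGroup.mk [(i, b)]) = FreeGroup.mk [(i, b)] := by
        cases b
        · have : FreeGroup.mk [(i, false)] = (FreeGroup.of i)⁻¹ := by
            rw [FreeGroup.of, FreeGroup.inv_mk]; rfl
          simp [this, kill, FreeGroup.lift_apply_of, hi]
        · simp [FreeGroup.of, kill, FreeGroup.lift_apply_of, hi]
      rw [h1, FreeGroup.mul_mk]
      simp [hi]

/-- occurrence count of generator `i` in a word -/
def cnt (i : Fin n) (L : List (Fin n × Bool)) : ℕ := L.countP fun p => p.1 = i

lemma kill_eq_self_of_cnt_zero {S : Finset (Fin n)} {w : FreeGroup (Fin n)}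
    (h : ∀ i ∈ S, cnt i w.toWord = 0) : kill S w = w := by
  conv_lhs => rw [← FreeGroup.mk_toWord (x := w)]
  rw [kill_mk]
  have : (w.toWord.filter fun p => p.1 ∉ S) = w.toWord := by
    apply List.filter_eq_self.mpr
    intro a ha
    simp only [decide_eq_true_eq]
    intro hS
    have := h a.1 hS
    rw [cnt, List.countP_eq_zero] at this
    exact this a ha (by simp)
  rw [this, FreeGroup.mk_toWord]

/-- signed exponent-sum of generator `i` -/
def sg (i : Fin n) (w : FreeGroup (Fin n)) : ℤ :=
  Multiplicative.toAdd (FreeGroup.lift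
    (fun j => Multiplicative.ofAdd (if j = i then (1 : ℤ) else 0)) w)

def pcnt (i : Fin n) (L : List (Fin n × Bool)) : ℕ := L.countP fun p => p.1 = i ∧ p.2 = true
def ncnt (i : Fin n) (L : List (Fin n × Bool)) : ℕ := L.countP fun p => p.1 = i ∧ p.2 = false

lemma cnt_eq_pcnt_add_ncnt (i : Fin n) (L : List (Fin n × Bool)) :
    cnt i L = pcnt i L + ncnt i L := by
  induction L with
  | nil => rfl
  | cons x L ih =>
    obtain ⟨j, b⟩ := x
    by_cases hj : j = i <;> cases b <;>
      simp [cnt, pcnt, ncnt, List.countP_cons, hj] at * <;> omega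

lemma sg_mk (i : Fin n) (L : List (Fin n × Bool)) :
    sg i (FreeGroup.mk L) = (pcnt i L : ℤ) - (ncnt i L : ℤ) := by
  induction L with
  | nil => simp [sg, FreeGroup.one_eq_mk.symm, pcnt, ncnt]
  | cons x L ih =>
    obtain ⟨j, b⟩ := x
    rw [show ((j,b) :: L) = [(j,b)] ++ L from rfl, ← FreeGroup.mul_mk]
    have hsplit : sg i (FreeGroup.mk [(j, b)] * FreeGroup.mk L)
        = sg i (FreeGroup.mk [(j, b)]) + sg i (FreeGroup.mk L) := by
      simp [sg, map_mul]
    have hone : sg i (FreeGroup.mk [(j, b)]) = if j = i then (if b then 1 else -1) else 0 := by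
      cases b
      · have : FreeGroup.mk [(j, false)] = (FreeGroup.of j)⁻¹ := by
          rw [FreeGroup.of, FreeGroup.inv_mk]; rfl
        by_cases hj : j = i <;> simp [this, sg, FreeGroup.lift_apply_of, hj]
      · by_cases hj : j = i <;> simp [FreeGroup.of, sg, FreeGroup.lift_apply_of, hj]
    rw [hsplit, hone, ih]
    by_cases hj : j = i <;> cases b <;>
      simp [pcnt, ncnt, List.countP_cons, hj] <;> omega

lemma sg_one (i : Fin n) : sg i (1 : FreeGroup (Fin n)) = 0 := by simp [sg]
section T4
open FreeGroup List
variable {n : ℕ}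

/-- If `c` has no occurrences of generator `i` and commutes with `of i`, then `c = 1`. -/
lemma eq_one_of_comm_of_cnt_zero {i : Fin n} {c : FreeGroup (Fin n)}
    (h0 : cnt i c.toWord = 0) (hc : FreeGroup.of i * c = c * FreeGroup.of i) : c = 1 := by
  obtain ⟨m, hm⟩ : ∃ m, c.toWord = m := ⟨_, rfl⟩
  have hmr : Reduced m := hm ▸ reduced_toWord c
  have hcm : c = FreeGroup.mk m := by rw [← hm, FreeGroup.mk_toWord]
  have hni : ∀ a ∈ m, a.1 ≠ i := by
    intro a ha
    have h0' : cnt i m = 0 := hm ▸ h0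
    have := (List.countP_eq_zero.mp h0') a ha
    simpa using this
  have h1 : FreeGroup.of i * c = FreeGroup.mk ((i, true) :: m) := by
    rw [FreeGroup.of, hcm, FreeGroup.mul_mk]; rfl
  have h2 : c * FreeGroup.of i = FreeGroup.mk (m ++ [(i, true)]) := by
    rw [FreeGroup.of, hcm, FreeGroup.mul_mk]
  have hr1 : Reduced ((i, true) :: m) := by
    refine List.isChain_cons.mpr ⟨?_, hmr⟩
    intro y hy he
    exact hni y (List.mem_of_mem_head? hy) (by rw [← he])
  have hr2 : Reduced (m ++ [(i, true)]) := by
    refine List.isChain_append.mpr ⟨hmr, List.isChain_singleton _, ?_⟩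
    intro x hx y hy he
    have hyy : (i, true) = y := by simpa using hy
    subst hyy
    exact hni x (List.mem_of_mem_getLast? hx) (congrArg Prod.fst he)
  have heq : ((i, true) :: m) = (m ++ [(i, true)]) := by
    have h3 := hc
    rw [h1, h2] at h3
    have h4 := congrArg FreeGroup.toWord h3
    rwa [hr1.toWord_mk, hr2.toWord_mk] at h4
  cases m with
  | nil => rw [hcm, FreeGroup.one_eq_mk]
  | cons a t =>
    exfalso
    have h5 : (i, true) = a := by
      have := congrArg (fun l => List.head? l) heq
      simpa using this
    exact hni a List.mem_cons_self (by rw [← h5])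

/-- split a list at the first element satisfying `p` -/
lemma exists_first_split (p : (Fin n × Bool) → Bool) (L : List (Fin n × Bool))
    (h : L.countP p ≠ 0) :
    ∃ u a t, L = u ++ a :: t ∧ p a = true ∧ u.countP p = 0 := by
  induction L with
  | nil => simp at h
  | cons x L ih =>
    by_cases hx : p x = true
    · exact ⟨[], x, L, rfl, hx, rfl⟩
    · have : L.countP p ≠ 0 := by
        rw [List.countP_cons] at h
        simpa [hx] using h
      obtain ⟨u, a, t, h1, h2, h3⟩ := ih this
      exact ⟨x :: u, a, t, by rw [h1]; rfl, h2, by rw [List.countP_cons]; simp [hx, h3]⟩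

end T4
section T5
open FreeGroup List
variable {n : ℕ}

/-- w is a nontrivial element supported on T, killed by removal of any single j ∈ T. -/
def Sol (T : Finset (Fin n)) (w : FreeGroup (Fin n)) : Prop :=
  w ≠ 1 ∧ (∀ j, j ∉ T → cnt j w.toWord = 0) ∧ (∀ j ∈ T, kill {j} w = 1)

lemma length_eq_sum_cnt (L : List (Fin n × Bool)) :
    L.length = ∑ j : Fin n, cnt j L := by
  induction L with
  | nil => simp [cnt]
  | cons x L ih =>
    simp only [List.length_cons, ih, cnt, List.countP_cons]
    rw [Finset.sum_add_distrib]
    have : ∑ j : Fin n, (if (decide (x.1 = j)) = true then 1 else 0) = 1 := by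
      simp only [decide_eq_true_eq]
      rw [Finset.sum_ite_eq (Finset.univ) x.1 (fun _ => 1)]
      simp
    omega

lemma sol_cnt_ne_zero {T : Finset (Fin n)} {w : FreeGroup (Fin n)} (hw : Sol T w)
    {i : Fin n} (hi : i ∈ T) : cnt i w.toWord ≠ 0 := by
  intro h0
  have : kill {i} w = w := by
    apply kill_eq_self_of_cnt_zero
    intro j hj
    rw [Finset.mem_singleton] at hj
    subst hj
    exact h0
  exact hw.1 (by rw [← this, hw.2.2 i hi])

lemma sol_pcnt_eq_ncnt {T : Finset (Fin n)} {w : FreeGroup (Fin n)} (hw : Sol T w)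
    (hT : 2 ≤ T.card) {i : Fin n} (hi : i ∈ T) :
    pcnt i w.toWord = ncnt i w.toWord := by
  obtain ⟨j, hj, hji⟩ := Finset.exists_mem_ne (s := T) (by omega) i
  have hk : kill {j} w = 1 := hw.2.2 j hj
  rw [← FreeGroup.mk_toWord (x := w), kill_mk] at hk
  have hsg := congrArg (sg i) hk
  rw [sg_mk, sg_one] at hsg
  have hp : pcnt i (w.toWord.filter fun p => p.1 ∉ ({j} : Finset (Fin n)))
      = pcnt i w.toWord := by
    rw [pcnt, pcnt, List.countP_filter]
    apply List.countP_congr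
    intro a _
    by_cases h1 : a.1 = i <;> by_cases h2 : a.2 = true <;>
      simp [h1, h2, Ne.symm hji]
  have hn : ncnt i (w.toWord.filter fun p => p.1 ∉ ({j} : Finset (Fin n)))
      = ncnt i w.toWord := by
    rw [ncnt, ncnt, List.countP_filter]
    apply List.countP_congr
    intro a _
    by_cases h1 : a.1 = i <;> by_cases h2 : a.2 = true <;>
      simp [h1, h2, Ne.symm hji]
  rw [hp, hn] at hsg
  omega

lemma sol_two_le_cnt {T : Finset (Fin n)} {w : FreeGroup (Fin n)} (hw : Sol T w)
    (hT : 2 ≤ T.card) {i : Fin n} (hi : i ∈ T) :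
    2 ≤ cnt i w.toWord ∧ cnt i w.toWord = 2 * pcnt i w.toWord := by
  have h1 := sol_cnt_ne_zero hw hi
  have h2 := sol_pcnt_eq_ncnt hw hT hi
  have h3 := cnt_eq_pcnt_add_ncnt i w.toWord
  omega

end T5
section T6a
open FreeGroup List
variable {n : ℕ}

lemma pcnt_le_cnt (i : Fin n) (L : List (Fin n × Bool)) : pcnt i L ≤ cnt i L :=
  List.countP_mono_left (by intro a _ h; simp at h ⊢; exact h.1)

lemma ncnt_le_cnt (i : Fin n) (L : List (Fin n × Bool)) : ncnt i L ≤ cnt i L :=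
  List.countP_mono_left (by intro a _ h; simp at h ⊢; simp_all)

lemma pcnt_singleton (i j : Fin n) (b : Bool) :
    pcnt i [(j, b)] = if j = i ∧ b = true then 1 else 0 := by
  by_cases h1 : j = i <;> cases b <;> simp [pcnt, h1]

lemma ncnt_singleton (i j : Fin n) (b : Bool) :
    ncnt i [(j, b)] = if j = i ∧ b = false then 1 else 0 := by
  by_cases h1 : j = i <;> cases b <;> simp [ncnt, h1]

lemma pcnt_append (i : Fin n) (L M : List (Fin n × Bool)) :
    pcnt i (L ++ M) = pcnt i L + pcnt i M := List.countP_append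

lemma ncnt_append (i : Fin n) (L M : List (Fin n × Bool)) :
    ncnt i (L ++ M) = ncnt i L + ncnt i M := List.countP_append

end T6a
section T6
open FreeGroup List
variable {n : ℕ}

lemma invRev_singleton (i : Fin n) (b : Bool) :
    FreeGroup.invRev [(i, b)] = [(i, !b)] := by
  simp [FreeGroup.invRev]

lemma filter_eq_self_of_cnt_zero {i : Fin n} {L : List (Fin n × Bool)} (h : cnt i L = 0) :
    (L.filter fun p => p.1 ∉ ({i} : Finset (Fin n))) = L := by
  apply List.filter_eq_self.mpr
  intro a ha
  have := (List.countP_eq_zero.mp h) a ha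
  simp only [decide_eq_true_eq] at this ⊢
  simp [this]

lemma cnt_filter_le (i : Fin n) (q : (Fin n × Bool) → Bool) (L : List (Fin n × Bool)) :
    cnt i (L.filter q) ≤ cnt i L :=
  List.Sublist.countP_le (List.filter_sublist (l := L))

lemma cnt_toWord_mk_le (i : Fin n) (L : List (Fin n × Bool)) :
    cnt i (FreeGroup.mk L).toWord ≤ cnt i L := by
  rw [FreeGroup.toWord_mk]
  exact List.Sublist.countP_le (FreeGroup.Red.sublist (FreeGroup.reduce.red))

/-- The key decomposition. -/
lemma key_decomposition {T : Finset (Fin n)} {w : FreeGroup (Fin n)} (hw : Sol T w)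
    (hT : 2 ≤ T.card) {i : Fin n} (hi : i ∈ T) (h2 : cnt i w.toWord = 2) :
    ∃ V : FreeGroup (Fin n), Sol (T.erase i) V ∧ 2 * V.norm + 2 ≤ w.norm := by
  obtain ⟨L, hL⟩ : ∃ L, w.toWord = L := ⟨_, rfl⟩
  have hred : Reduced L := hL ▸ reduced_toWord w
  have hwL : w = FreeGroup.mk L := by rw [← hL, FreeGroup.mk_toWord]
  rw [hL] at h2
  obtain ⟨u, a, t, hsplit1, ha, hu0⟩ :=
    exists_first_split (fun p => decide (p.1 = i)) L (by rw [show L.countP _ = cnt i L from rfl]; omega)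
  rw [show u.countP _ = cnt i u from rfl] at hu0
  have hcnt_t : cnt i t = 1 := by
    have : cnt i L = cnt i u + (List.countP (fun p => decide (p.1 = i)) [a] + cnt i t) := by
      rw [hsplit1, cnt, List.countP_append, show (a :: t) = [a] ++ t from rfl,
        List.countP_append]
      rfl
    simp [List.countP_cons, ha] at this
    omega
  obtain ⟨v, a2, z, hsplit2, ha2, hv0⟩ :=
    exists_first_split (fun p => decide (p.1 = i)) t (by rw [show t.countP _ = cnt i t from rfl]; omega)
  rw [show v.countP _ = cnt i v from rfl] at hv0
  have hcnt_z : cnt i z = 0 := by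
    have : cnt i t = cnt i v + (List.countP (fun p => decide (p.1 = i)) [a2] + cnt i z) := by
      rw [hsplit2, cnt, List.countP_append, show (a2 :: z) = [a2] ++ z from rfl,
        List.countP_append]
      rfl
    simp [List.countP_cons, ha2] at this
    omega
  obtain ⟨i1, b1⟩ := a
  obtain ⟨i2, b2⟩ := a2
  simp only [decide_eq_true_eq] at ha ha2
  rw [ha] at hsplit1
  rw [ha2] at hsplit2
  clear ha ha2
  have hLs : L = u ++ [(i, b1)] ++ v ++ [(i, b2)] ++ z := by
    rw [hsplit1, hsplit2]; simp
  -- opposite signs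
  have hpu : pcnt i u = 0 := by have := pcnt_le_cnt i u; omega
  have hnu : ncnt i u = 0 := by have := ncnt_le_cnt i u; omega
  have hpv : pcnt i v = 0 := by have := pcnt_le_cnt i v; omega
  have hnv : ncnt i v = 0 := by have := ncnt_le_cnt i v; omega
  have hpz : pcnt i z = 0 := by have := pcnt_le_cnt i z; omega
  have hnz : ncnt i z = 0 := by have := ncnt_le_cnt i z; omega
  have hb2 : b2 = !b1 := by
    have hpn := sol_pcnt_eq_ncnt hw hT hi
    rw [hL, hLs] at hpn
    rw [pcnt_append, pcnt_append, pcnt_append, pcnt_append,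
        ncnt_append, ncnt_append, ncnt_append, ncnt_append,
        pcnt_singleton, pcnt_singleton, ncnt_singleton, ncnt_singleton,
        hpu, hnu, hpv, hnv, hpz, hnz] at hpn
    cases b1 <;> cases b2 <;> simp_all
  subst hb2
  -- group elements
  set U := FreeGroup.mk u with hU
  set V := FreeGroup.mk v with hV
  set Z := FreeGroup.mk z with hZ
  set X := FreeGroup.mk [(i, b1)] with hX
  have hXinv : X⁻¹ = FreeGroup.mk [(i, !b1)] := by
    rw [hX, FreeGroup.inv_mk, invRev_singleton]
  have hwdec : w = U * X * V * X⁻¹ * Z := by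
    rw [hwL, hLs, hXinv, hU, hV, hZ, hX]
    rw [FreeGroup.mul_mk, FreeGroup.mul_mk, FreeGroup.mul_mk, FreeGroup.mul_mk]
  -- reducedness of pieces
  have hredu : Reduced u := by
    rw [hLs] at hred
    exact (hred.append_left).append_left.append_left.append_left
  have hredv : Reduced v := by
    rw [hLs] at hred
    exact ((hred.append_left).append_left.append_right)
  have hredz : Reduced z := by
    rw [hLs] at hred
    exact hred.append_right
  -- v nonempty
  have hvne : v ≠ [] := by
    intro hveq
    subst hveq
    rw [hLs] at hred
    have h3 : Reduced ([(i, b1)] ++ ([] ++ ([(i, !b1)] ++ z))) := by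
      have h4 := hred
      rw [List.append_assoc, List.append_assoc, List.append_assoc] at h4
      exact h4.append_right
    simp only [List.nil_append, List.singleton_append] at h3
    have := List.isChain_cons_cons.mp h3
    exact this.1 rfl
  -- kill i gives U*V*Z = 1
  have hfilterL : (L.filter fun p => p.1 ∉ ({i} : Finset (Fin n))) = u ++ v ++ z := by
    rw [hLs]
    rw [List.filter_append, List.filter_append, List.filter_append, List.filter_append]
    rw [filter_eq_self_of_cnt_zero hu0, filter_eq_self_of_cnt_zero hv0,
      filter_eq_self_of_cnt_zero hcnt_z]
    have hs1 : ([(i, b1)].filter fun p => p.1 ∉ ({i} : Finset (Fin n))) = [] := by simp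
    have hs2 : ([(i, !b1)].filter fun p => p.1 ∉ ({i} : Finset (Fin n))) = [] := by simp
    rw [hs1, hs2]
    simp
  have hUVZ : U * (V * Z) = 1 := by
    rw [hU, hV, hZ, FreeGroup.mul_mk, FreeGroup.mul_mk, ← List.append_assoc, ← hfilterL,
      ← kill_mk, ← hwL]
    exact hw.2.2 i hi
  have hZval : Z = V⁻¹ * U⁻¹ := by
    have h := hUVZ
    rw [← mul_assoc] at h
    rw [← inv_eq_of_mul_eq_one_right h, mul_inv_rev]
  have hVinv : V⁻¹ = Z * U := by rw [hZval]; group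
  -- norms
  have hnormw : w.norm = L.length := by rw [hwL, hred.norm_mk]
  have hnormU : U.norm = u.length := hredu.norm_mk
  have hnormV : V.norm = v.length := hredv.norm_mk
  have hnormZ : Z.norm = z.length := hredz.norm_mk
  have hlenL : L.length = u.length + v.length + z.length + 2 := by
    rw [hLs]; simp; omega
  have hVle : V.norm ≤ Z.norm + U.norm := by
    rw [← FreeGroup.norm_inv_eq, hVinv]
    exact FreeGroup.norm_mul_le Z U
  have hVne1 : V ≠ 1 := by
    intro h1
    rw [h1, FreeGroup.norm_one] at hnormV
    exact hvne (List.eq_nil_of_length_eq_zero hnormV.symm)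
  refine ⟨V, ⟨hVne1, ?_, ?_⟩, by omega⟩
  · -- support
    intro j hj
    rw [hredv.toWord_mk]
    by_cases hji : j = i
    · subst hji; exact hv0
    · have hjT : j ∉ T := fun hT' => hj (Finset.mem_erase.mpr ⟨hji, hT'⟩)
      have h0 : cnt j L = 0 := hL ▸ hw.2.1 j hjT
      have hsub : v <+ L := by
        have hinf : v <:+: L := ⟨u ++ [(i, b1)], [(i, !b1)] ++ z, by rw [hLs]; simp⟩
        exact hinf.sublist
      have h9 := List.Sublist.countP_le (p := fun p : Fin n × Bool => decide (p.1 = j)) hsub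
      rw [cnt] at h0 ⊢
      omega
  · -- kills
    intro j hj
    obtain ⟨hji, hjT⟩ := Finset.mem_erase.mp hj
    have hkj := hw.2.2 j hjT
    rw [hwdec, _root_.map_mul, _root_.map_mul, _root_.map_mul, _root_.map_mul,
      _root_.map_inv] at hkj
    set kU := kill {j} U with hkU
    set kV := kill {j} V with hkV
    have hkX : kill {j} X = X := by
      rw [hX, kill_mk]
      congr 1
      have hij : ¬ i = j := Ne.symm hji
      simp [hij]
    have hkZ : kill {j} Z = kV⁻¹ * kU⁻¹ := by
      rw [hZval, _root_.map_mul, _root_.map_inv, _root_.map_inv]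
    rw [hkX, hkZ] at hkj
    have hconj : kU * (X * kV * X⁻¹ * kV⁻¹) * kU⁻¹ = 1 := by
      rw [← hkj]; group
    have hinner : X * kV * X⁻¹ * kV⁻¹ = 1 := by
      have h10 := congrArg (fun g => kU⁻¹ * g * kU) hconj
      simpa [mul_assoc] using h10
    have hcomm : X * kV = kV * X := by
      have h5 : X * kV * X⁻¹ = kV := by
        have h11 := congrArg (fun g => g * kV) hinner
        simpa [mul_assoc] using h11
      calc X * kV = (X * kV * X⁻¹) * X := by group
      _ = kV * X := by rw [h5]
    have hofi : FreeGroup.of i * kV = kV * FreeGroup.of i := by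
      cases b1 with
      | true =>
        have hXof : X = FreeGroup.of i := by rw [hX]; rfl
        rw [hXof] at hcomm
        exact hcomm
      | false =>
        have hXof : X = (FreeGroup.of i)⁻¹ := by
          rw [hX, show [(i, false)] = FreeGroup.invRev [(i, true)] by
            simp [invRev_singleton], ← FreeGroup.inv_mk]
          rfl
        rw [hXof] at hcomm
        have h6 := congrArg (fun g => FreeGroup.of i * g * FreeGroup.of i) hcomm
        simp only [mul_assoc] at h6
        rw [mul_inv_cancel_left] at h6
        simpa [mul_assoc] using h6.symm
    have hcnt0 : cnt i kV.toWord = 0 := by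
      rw [hkV, hV, kill_mk]
      have h7 := cnt_toWord_mk_le i (v.filter fun p => decide (p.1 ∉ ({j} : Finset (Fin n))))
      have h8 := cnt_filter_le i (fun p => decide (p.1 ∉ ({j} : Finset (Fin n)))) v
      omega
    rw [hkV]
    exact eq_one_of_comm_of_cnt_zero hcnt0 hofi

end T6

section T7
open FreeGroup List
variable {n : ℕ}

lemma norm_ge_card_mul {T : Finset (Fin n)} {w : FreeGroup (Fin n)} {c : ℕ}
    (h : ∀ j ∈ T, c ≤ cnt j w.toWord) : T.card * c ≤ w.norm := by
  have h1 : w.norm = ∑ j : Fin n, cnt j w.toWord := length_eq_sum_cnt _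
  calc T.card * c = ∑ _j ∈ T, c := by rw [Finset.sum_const, smul_eq_mul]
  _ ≤ ∑ j ∈ T, cnt j w.toWord := Finset.sum_le_sum h
  _ ≤ ∑ j : Fin n, cnt j w.toWord :=
      Finset.sum_le_sum_of_subset (Finset.subset_univ T)
  _ = w.norm := h1.symm

lemma sol_card_two {T : Finset (Fin n)} {w : FreeGroup (Fin n)} (hT : T.card = 2)
    (hw : Sol T w) : 4 ≤ w.norm := by
  have := norm_ge_card_mul (T := T) (w := w) (c := 2)
    (fun j hj => (sol_two_le_cnt hw (by omega) hj).1)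
  omega

lemma sol_card_three {T : Finset (Fin n)} {w : FreeGroup (Fin n)} (hT : T.card = 3)
    (hw : Sol T w) : 10 ≤ w.norm := by
  by_cases hex : ∃ i ∈ T, cnt i w.toWord = 2
  · obtain ⟨i, hi, h2⟩ := hex
    obtain ⟨V, hV, hle⟩ := key_decomposition hw (by omega) hi h2
    have h4 := sol_card_two (by rw [Finset.card_erase_of_mem hi, hT]) hV
    omega
  · have h4 : ∀ j ∈ T, 4 ≤ cnt j w.toWord := by
      intro j hj
      obtain ⟨h1, h2⟩ := sol_two_le_cnt hw (by omega) hj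
      have h3 : cnt j w.toWord ≠ 2 := fun h => hex ⟨j, hj, h⟩
      omega
    have := norm_ge_card_mul h4
    omega

lemma sol_card_four {T : Finset (Fin n)} {w : FreeGroup (Fin n)} (hT : T.card = 4)
    (hw : Sol T w) : 16 ≤ w.norm := by
  by_cases hex : ∃ i ∈ T, cnt i w.toWord = 2
  · obtain ⟨i, hi, h2⟩ := hex
    obtain ⟨V, hV, hle⟩ := key_decomposition hw (by omega) hi h2
    have h4 := sol_card_three (by rw [Finset.card_erase_of_mem hi, hT]) hV
    omega
  · have h4 : ∀ j ∈ T, 4 ≤ cnt j w.toWord := by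
      intro j hj
      obtain ⟨h1, h2⟩ := sol_two_le_cnt hw (by omega) hj
      have h3 : cnt j w.toWord ≠ 2 := fun h => hex ⟨j, hj, h⟩
      omega
    have := norm_ge_card_mul h4
    omega

lemma kill_empty (w : FreeGroup (Fin n)) : kill (∅ : Finset (Fin n)) w = w := by
  have h : kill (∅ : Finset (Fin n)) = MonoidHom.id _ :=
    FreeGroup.ext_hom _ _ (fun a => by simp [kill, FreeGroup.lift_apply_of])
  rw [h]; rfl

lemma kill_comp {S : Finset (Fin n)} {i : Fin n} (hi : i ∈ S) (w : FreeGroup (Fin n)) :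
    kill S (kill {i} w) = kill S w := by
  have h : (kill S).comp (kill {i}) = kill S := by
    apply FreeGroup.ext_hom
    intro a
    by_cases h1 : a = i
    · subst h1
      simp [kill, FreeGroup.lift_apply_of, hi]
    · by_cases h2 : a ∈ S <;> simp [kill, FreeGroup.lift_apply_of, h1, h2]
  calc kill S (kill {i} w) = ((kill S).comp (kill {i})) w := rfl
  _ = kill S w := by rw [h]

end T7

def x₁ : FreeGroup (Fin 4) := FreeGroup.of 0
def x₂ : FreeGroup (Fin 4) := FreeGroup.of 1
def x₃ : FreeGroup (Fin 4) := FreeGroup.of 2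
def x₄ : FreeGroup (Fin 4) := FreeGroup.of 3

open scoped commutatorElement

theorem one_out_of_four_min_length :
    IsSolution 1 ⁅⁅x₁, x₂⁆, ⁅x₃, x₄⁆⁆ ∧ FreeGroup.norm ⁅⁅x₁, x₂⁆, ⁅x₃, x₄⁆⁆ = 16 ∧
    ∀ w' : FreeGroup (Fin 4), IsSolution 1 w' → 16 ≤ FreeGroup.norm w' := by
  have hnorm : FreeGroup.norm ⁅⁅x₁, x₂⁆, ⁅x₃, x₄⁆⁆ = 16 := by decide
  have hkills : ∀ i : Fin 4, kill {i} ⁅⁅x₁, x₂⁆, ⁅x₃, x₄⁆⁆ = 1 := by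
    intro i
    fin_cases i <;>
      simp [commutatorElement_def, kill, x₁, x₂, x₃, x₄, FreeGroup.lift_apply_of,
        Finset.mem_singleton, _root_.map_mul, _root_.map_inv] <;> group
  have hne : ⁅⁅x₁, x₂⁆, ⁅x₃, x₄⁆⁆ ≠ 1 := by
    intro h
    rw [h, FreeGroup.norm_one] at hnorm
    omega
  refine ⟨?_, hnorm, ?_⟩
  · intro S
    constructor
    · intro hcard
      obtain ⟨i, hi⟩ := Finset.card_pos.mp (show 0 < S.card by omega)
      rw [← kill_comp hi, hkills i, _root_.map_one]
    · intro hcard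
      have hS : S = ∅ := Finset.card_eq_zero.mp (show S.card = 0 by omega)
      subst hS
      rw [kill_empty]
      exact hne
  · intro w' hw'
    apply sol_card_four (T := Finset.univ) (by simp)
    refine ⟨?_, ?_, ?_⟩
    · intro h1
      have := (hw' ∅).2 (by simp)
      rw [kill_empty] at this
      exact this h1
    · intro j hj
      exact absurd (Finset.mem_univ j) hj
    · intro j _
      exact (hw' {j}).1 (by simp)
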